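/- arXiv:2504.11133 — 3 statements merged into one kernel-verified Lean document; each statement's English description precedes it below -/
import Mathlib

section
/- Let T > 0, R > 0 with R² ≥ T, and define λ(s) = (T-s)⁻¹ - R²(T-s)⁻² for s ∈ [0,T). Then for all 0 ≤ l ≤ u < T: ∫_l^u exp(2∫_l^s λ(t) dt) ds = ((T-l)²/(2R²)) · (1 - exp(2R²/(T-l) - 2R²/(T-u))). -/
open intervalIntegral

/-- explicit computation of `I(l,u)` in the compactly supported case. -/
theorem stmt5 (T R : ℝ) (hT : 0 < T) (hR : 0 < R) (hRT : T ≤ R ^ 2)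
    (l u : ℝ) (hl : 0 ≤ l) (hlu : l ≤ u) (huT : u < T) :
    ∫ s in l..u,
        Real.exp (2 * ∫ t in l..s, ((T - t)⁻¹ - R ^ 2 * ((T - t) ^ 2)⁻¹)) =
      (T - l) ^ 2 / (2 * R ^ 2) *
        (1 - Real.exp (2 * R ^ 2 / (T - l) - 2 * R ^ 2 / (T - u))) := by
  have hTl : 0 < T - l := by linarith
  have hTu : 0 < T - u := by linarith
  have hR2 : (0:ℝ) < R ^ 2 := by positivity
  have key : Set.EqOn
      (fun s => Real.exp (2 * ∫ t in l..s, ((T - t)⁻¹ - R ^ 2 * ((T - t) ^ 2)⁻¹)))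
      (fun s => (T - l)^2 * ((T - s)^2)⁻¹ * Real.exp (2*R^2/(T-l) - 2*R^2/(T-s)))
      (Set.uIcc l u) := by
    intro s hs
    rw [Set.uIcc_of_le hlu] at hs
    have hTs : 0 < T - s := by linarith [hs.2]
    have hinner : (∫ t in l..s, ((T - t)⁻¹ - R ^ 2 * ((T - t) ^ 2)⁻¹))
        = (Real.log (T-l) - Real.log (T-s)) + (R^2*(T-l)⁻¹ - R^2*(T-s)⁻¹) := by
      have hderiv : ∀ t ∈ Set.uIcc l s,
          HasDerivAt (fun t => -Real.log (T - t) - R^2 * (T - t)⁻¹)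
            ((T - t)⁻¹ - R ^ 2 * ((T - t) ^ 2)⁻¹) t := by
        intro t ht
        rw [Set.uIcc_of_le hs.1] at ht
        have hTt : 0 < T - t := by linarith [ht.2]
        have h1 : HasDerivAt (fun t : ℝ => T - t) (-1) t := by
          simpa using (hasDerivAt_id t).const_sub T
        have h2 := (Real.hasDerivAt_log hTt.ne').comp t h1
        have h3 := (h1.inv hTt.ne').const_mul (R^2)
        have h4 := h2.neg.sub h3
        exact h4.congr_deriv (by ring)
      have hcont : IntervalIntegrable
          (fun t => ((T - t)⁻¹ - R ^ 2 * ((T - t) ^ 2)⁻¹)) MeasureTheory.volume l s := by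
        apply ContinuousOn.intervalIntegrable
        apply ContinuousOn.sub
        · apply ContinuousOn.inv₀ (by fun_prop)
          intro t ht
          rw [Set.uIcc_of_le hs.1] at ht
          have : 0 < T - t := by linarith [ht.2]
          exact this.ne'
        · apply ContinuousOn.mul continuousOn_const
          apply ContinuousOn.inv₀ (by fun_prop)
          intro t ht
          rw [Set.uIcc_of_le hs.1] at ht
          have h5 : 0 < T - t := by linarith [ht.2]
          positivity
      rw [intervalIntegral.integral_eq_sub_of_hasDerivAt hderiv hcont]
      ring
    have e1 : Real.exp (2*Real.log (T-l)) = (T-l)^2 := by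
      rw [show (2:ℝ)*Real.log (T-l) = Real.log ((T-l)^2) by
        rw [Real.log_pow]; push_cast; ring]
      exact Real.exp_log (by positivity)
    have e2 : Real.exp (2*Real.log (T-s)) = (T-s)^2 := by
      rw [show (2:ℝ)*Real.log (T-s) = Real.log ((T-s)^2) by
        rw [Real.log_pow]; push_cast; ring]
      exact Real.exp_log (by positivity)
    simp only [hinner]
    rw [show 2*((Real.log (T-l) - Real.log (T-s)) + (R^2*(T-l)⁻¹ - R^2*(T-s)⁻¹))
        = (2*Real.log (T-l) - 2*Real.log (T-s)) + (2*R^2/(T-l) - 2*R^2/(T-s)) by ring]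
    rw [Real.exp_add, Real.exp_sub, e1, e2]
    ring
  rw [intervalIntegral.integral_congr key]
  have hderiv : ∀ s ∈ Set.uIcc l u,
      HasDerivAt (fun s => -(T-l)^2/(2*R^2) * Real.exp (2*R^2/(T-l) - 2*R^2/(T-s)))
        ((T - l)^2 * ((T - s)^2)⁻¹ * Real.exp (2*R^2/(T-l) - 2*R^2/(T-s))) s := by
    intro s hs
    rw [Set.uIcc_of_le hlu] at hs
    have hTs : 0 < T - s := by linarith [hs.2]
    have h1 : HasDerivAt (fun s : ℝ => T - s) (-1) s := by
      simpa using (hasDerivAt_id s).const_sub T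
    have h2 := (h1.inv hTs.ne').const_mul (2*R^2)
    have h3 := (h2.const_sub (2*R^2/(T-l))).exp
    have h4 := h3.const_mul (-(T-l)^2/(2*R^2))
    have harg : ∀ x : ℝ, 2*R^2/(T-l) - 2*R^2*(T-x)⁻¹ = 2*R^2/(T-l) - 2*R^2/(T-x) := by
      intro x; ring
    simp only [Pi.inv_apply, harg] at h4
    exact h4.congr_deriv (by field_simp)
  have hcont : IntervalIntegrable
      (fun s => (T - l)^2 * ((T - s)^2)⁻¹ * Real.exp (2*R^2/(T-l) - 2*R^2/(T-s)))
      MeasureTheory.volume l u := by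
    apply ContinuousOn.intervalIntegrable
    have hne : ∀ s ∈ Set.uIcc l u, T - s ≠ 0 := by
      intro s hs
      rw [Set.uIcc_of_le hlu] at hs
      have : 0 < T - s := by linarith [hs.2]
      exact this.ne'
    apply ContinuousOn.mul
    · apply ContinuousOn.mul continuousOn_const
      apply ContinuousOn.inv₀ (by fun_prop)
      intro s hs
      have := hne s hs
      positivity
    · apply ContinuousOn.rexp
      apply ContinuousOn.sub continuousOn_const
      apply ContinuousOn.div continuousOn_const (by fun_prop) hne
  rw [intervalIntegral.integral_eq_sub_of_hasDerivAt hderiv hcont]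
  have : 2*R^2/(T-l) - 2*R^2/(T-l) = 0 := by ring
  rw [this, Real.exp_zero]
  ring
end

section
/- Let T > 0, 0 < α < T⁻¹, and set λ₀ = (α - T⁻¹)/(αT) < 0 and λ(s) = 1/(λ₀⁻¹ - s) for s ∈ [0,T]. Then for 0 ≤ l ≤ u ≤ T: ∫_l^u exp(2∫_l^s λ(t) dt) ds = (l - λ₀⁻¹)² · (1/(l - λ₀⁻¹) - 1/(u - λ₀⁻¹)) = ((l - λ₀⁻¹)/(u - λ₀⁻¹))·(u - l). Moreover T · (∫₀^T exp(2∫₀^s λ(t)dt) ds)⁻¹ = (αT)⁻¹. -/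
open intervalIntegral

lemma inner_int (c l s : ℝ) (hc : c < 0) (hl : 0 ≤ l) (hls : l ≤ s) :
    (∫ t in l..s, (c - t)⁻¹) = Real.log ((c - l) / (c - s)) := by
  rw [intervalIntegral.integral_comp_sub_left (fun x => x⁻¹) c,
    integral_inv (by
      rw [Set.uIcc_of_le (by linarith)]
      intro h
      exact absurd h.2 (by push_neg; linarith))]

lemma key_int (c l u : ℝ) (hc : c < 0) (hl : 0 ≤ l) (hlu : l ≤ u) :
    (∫ s in l..u, Real.exp (2 * ∫ t in l..s, (c - t)⁻¹))
      = (c - l) ^ 2 * ((c - u)⁻¹ - (c - l)⁻¹) := by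
  have hcl : c - l < 0 := by linarith
  have hcu : c - u < 0 := by linarith
  have h1 : Set.EqOn (fun s => Real.exp (2 * ∫ t in l..s, (c - t)⁻¹))
      (fun s => (c - l) ^ 2 * ((c - s) ^ 2)⁻¹) (Set.uIcc l u) := by
    intro s hs
    rw [Set.uIcc_of_le hlu] at hs
    have hls : l ≤ s := hs.1
    have hcs : c - s < 0 := by linarith
    have hr : 0 < (c - l) / (c - s) := div_pos_of_neg_of_neg hcl hcs
    simp only
    rw [inner_int c l s hc hl hls,
      show (2 : ℝ) * Real.log ((c - l) / (c - s)) = Real.log (((c - l) / (c - s)) ^ 2) by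
        rw [Real.log_pow]; push_cast; ring,
      Real.exp_log (by positivity), div_pow, div_eq_mul_inv]
  rw [intervalIntegral.integral_congr h1, intervalIntegral.integral_const_mul,
    intervalIntegral.integral_comp_sub_left (fun x => (x ^ 2)⁻¹) c]
  have hz : Set.EqOn (fun x : ℝ => (x ^ 2)⁻¹) (fun x : ℝ => x ^ (-2 : ℤ))
      (Set.uIcc (c - u) (c - l)) := by
    intro x _
    show (x ^ 2)⁻¹ = x ^ (-2 : ℤ)
    rw [zpow_neg]
    norm_cast
  rw [intervalIntegral.integral_congr hz,
    integral_zpow (Or.inr ⟨by norm_num, by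
      rw [Set.uIcc_of_le (by linarith)]
      intro h
      exact absurd h.2 (by push_neg; linarith)⟩)]
  have h1 : (c - l) ≠ 0 := ne_of_lt hcl
  have h2 : (c - u) ≠ 0 := ne_of_lt hcu
  rw [show (-2 : ℤ) + 1 = -1 by norm_num]
  rw [zpow_neg_one, zpow_neg_one]
  push_cast
  ring

/-- explicit computation of `I(l,u)` in the log-concave case, and the
resulting value `T · I(0,T)⁻¹ = (αT)⁻¹`. -/
theorem stmt7 (T α : ℝ) (hT : 0 < T) (hα : 0 < α) (hαT : α < T⁻¹) :
    (∀ l u : ℝ, 0 ≤ l → l ≤ u → u ≤ T →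
      (∫ s in l..u,
          Real.exp (2 * ∫ t in l..s, (((α - T⁻¹) / (α * T))⁻¹ - t)⁻¹)) =
        (l - ((α - T⁻¹) / (α * T))⁻¹) ^ 2 *
          ((l - ((α - T⁻¹) / (α * T))⁻¹)⁻¹ - (u - ((α - T⁻¹) / (α * T))⁻¹)⁻¹) ∧
      (∫ s in l..u,
          Real.exp (2 * ∫ t in l..s, (((α - T⁻¹) / (α * T))⁻¹ - t)⁻¹)) =
        (l - ((α - T⁻¹) / (α * T))⁻¹) / (u - ((α - T⁻¹) / (α * T))⁻¹) * (u - l)) ∧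
    T * (∫ s in (0:ℝ)..T,
        Real.exp (2 * ∫ t in (0:ℝ)..s, (((α - T⁻¹) / (α * T))⁻¹ - t)⁻¹))⁻¹ =
      (α * T)⁻¹ := by
  have hT0 : T ≠ 0 := ne_of_gt hT
  have hα0 : α ≠ 0 := ne_of_gt hα
  have hsub : α - T⁻¹ ≠ 0 := ne_of_lt (by linarith)
  set c : ℝ := ((α - T⁻¹) / (α * T))⁻¹ with hcdef
  have hd : (α - T⁻¹) / (α * T) < 0 :=
    div_neg_of_neg_of_pos (by linarith) (by positivity)
  have hc : c < 0 := inv_neg''.mpr hd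
  have hcval : c * (α - T⁻¹) = α * T := by
    rw [hcdef, inv_div, div_mul_cancel₀ _ hsub]
  clear_value c
  constructor
  · intro l u hl hlu huT
    have hcl : c - l < 0 := by linarith
    have hcu : c - u < 0 := by linarith
    have h1 : (c - l) ≠ 0 := ne_of_lt hcl
    have h2 : (c - u) ≠ 0 := ne_of_lt hcu
    have h3 : (l - c) ≠ 0 := fun h => h1 (by linarith [sub_eq_zero.mp h])
    have h4 : (u - c) ≠ 0 := fun h => h2 (by linarith [sub_eq_zero.mp h])
    rw [key_int c l u hc hl hlu]
    constructor
    · field_simp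
      ring
    · field_simp
      ring
  · rw [key_int c 0 T hc le_rfl (le_of_lt hT)]
    have hc0 : c ≠ 0 := ne_of_lt hc
    have hcT : c - T ≠ 0 := ne_of_lt (by linarith)
    have hX : (c - 0) ^ 2 * ((c - T)⁻¹ - (c - 0)⁻¹) = c * T / (c - T) := by
      field_simp
      ring
    have hcval' : c * α * T - c = α * T ^ 2 := by
      have := congrArg (· * T) hcval
      field_simp at this
      linarith
    rw [hX]
    field_simp
    linear_combination hcval'
end

section
/- Let μ ≪ ν be probability measures and for n ∈ ℕ define μⁿ with dμⁿ/dν = C_n⁻¹·min(dμ/dν, n) where C_n = ∫ min(dμ/dν, n) dν. Then C_n ↑ 1, H(μⁿ|ν) ≤ log n - log C_n < ∞, and H(μⁿ|μ) ≤ 1 - log C_n < ∞, where H denotes relative entropy. -/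
open MeasureTheory Filter
open scoped ENNReal Topology Classical

/-- Relative entropy (Kullback–Leibler divergence) `H(p|q)`, valued in `ℝ≥0∞`:
`∫ log(dp/dq) dp` when `p ≪ q` and the log-density is `p`-integrable, `∞` otherwise. -/
noncomputable def relEntropy {X : Type*} [MeasurableSpace X] (p q : Measure X) : ℝ≥0∞ :=
  if p ≪ q ∧ Integrable (fun x => Real.log (p.rnDeriv q x).toReal) p then
    ENNReal.ofReal (∫ x, Real.log (p.rnDeriv q x).toReal ∂p)
  else ∞

/-- truncation approximation `μⁿ` of `μ ≪ ν` with
`dμⁿ/dν = Cₙ⁻¹ min(dμ/dν, n)`, `Cₙ = ∫ min(dμ/dν, n) dν`: `Cₙ ↑ 1`,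
`H(μⁿ|ν) ≤ log n - log Cₙ` and `H(μⁿ|μ) ≤ 1 - log Cₙ`. -/
theorem stmt17 {X : Type*} [MeasurableSpace X] (μ ν : Measure X)
    [IsProbabilityMeasure μ] [IsProbabilityMeasure ν] (hμν : μ ≪ ν) :
    Monotone (fun n : ℕ => ∫ x, min ((μ.rnDeriv ν x).toReal) (n : ℝ) ∂ν) ∧
    Tendsto (fun n : ℕ => ∫ x, min ((μ.rnDeriv ν x).toReal) (n : ℝ) ∂ν)
      atTop (𝓝 1) ∧
    ∀ n : ℕ, 1 ≤ n →
      relEntropy (ν.withDensity (fun x => ENNReal.ofReal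
          ((∫ y, min ((μ.rnDeriv ν y).toReal) (n : ℝ) ∂ν)⁻¹ *
            min ((μ.rnDeriv ν x).toReal) (n : ℝ)))) ν ≤
        ENNReal.ofReal (Real.log n -
          Real.log (∫ y, min ((μ.rnDeriv ν y).toReal) (n : ℝ) ∂ν)) ∧
      relEntropy (ν.withDensity (fun x => ENNReal.ofReal
          ((∫ y, min ((μ.rnDeriv ν y).toReal) (n : ℝ) ∂ν)⁻¹ *
            min ((μ.rnDeriv ν x).toReal) (n : ℝ)))) μ ≤
        ENNReal.ofReal (1 -
          Real.log (∫ y, min ((μ.rnDeriv ν y).toReal) (n : ℝ) ∂ν)) := by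
  have hf_meas : Measurable (fun x => (μ.rnDeriv ν x).toReal) :=
    (Measure.measurable_rnDeriv μ ν).ennreal_toReal
  have hf_nonneg : ∀ x, 0 ≤ (μ.rnDeriv ν x).toReal := fun x => ENNReal.toReal_nonneg
  have hf_int : Integrable (fun x => (μ.rnDeriv ν x).toReal) ν :=
    Measure.integrable_toReal_rnDeriv
  have hf_one : ∫ x, (μ.rnDeriv ν x).toReal ∂ν = 1 := by
    rw [Measure.integral_toReal_rnDeriv hμν]; simp
  have hg_int' : ∀ n : ℕ, Integrable (fun x => min ((μ.rnDeriv ν x).toReal) (n:ℝ)) ν :=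
    fun n => hf_int.mono' (hf_meas.min measurable_const).aestronglyMeasurable
      (ae_of_all _ fun x => by
        rw [Real.norm_eq_abs, abs_of_nonneg (le_min (hf_nonneg x) (Nat.cast_nonneg n))]
        exact min_le_left _ _)
  refine ⟨?_, ?_, fun n hn => ?_⟩
  · intro m n hmn
    exact integral_mono (hg_int' m) (hg_int' n)
      (fun x => min_le_min le_rfl (Nat.cast_le.mpr hmn))
  · rw [← hf_one]
    refine tendsto_integral_of_dominated_convergence (fun x => (μ.rnDeriv ν x).toReal)
      (fun n => (hf_meas.min measurable_const).aestronglyMeasurable) hf_int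
      (fun n => ae_of_all _ fun x => ?_) (ae_of_all _ fun x => ?_)
    · rw [Real.norm_eq_abs, abs_of_nonneg (le_min (hf_nonneg x) (Nat.cast_nonneg n))]
      exact min_le_left _ _
    · refine tendsto_const_nhds.congr' ?_
      filter_upwards [eventually_ge_atTop ⌈(μ.rnDeriv ν x).toReal⌉₊] with n hn
      exact (min_eq_left ((Nat.le_ceil _).trans (by exact_mod_cast hn))).symm
  have hg_nonneg : ∀ x, 0 ≤ min ((μ.rnDeriv ν x).toReal) (n:ℝ) := fun x =>
    le_min (hf_nonneg x) (Nat.cast_nonneg n)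
  have hg_int : Integrable (fun x => min ((μ.rnDeriv ν x).toReal) (n:ℝ)) ν :=
    hf_int.mono' (hf_meas.min measurable_const).aestronglyMeasurable
      (ae_of_all _ fun x => by
        rw [Real.norm_eq_abs, abs_of_nonneg (hg_nonneg x)]
        exact min_le_left _ _)
  set Cn := ∫ y, min ((μ.rnDeriv ν y).toReal) (n:ℝ) ∂ν with hCn_def
  have hn1 : (1:ℝ) ≤ (n:ℝ) := by exact_mod_cast hn
  have hCn_le_one : Cn ≤ 1 := by
    rw [hCn_def, ← hf_one]
    exact integral_mono hg_int hf_int fun x => min_le_left _ _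
  have hCn_pos : 0 < Cn := by
    rcases lt_or_eq_of_le (integral_nonneg hg_nonneg : (0:ℝ) ≤ Cn) with h | h
    · exact h
    · exfalso
      have hz := (integral_eq_zero_iff_of_nonneg hg_nonneg hg_int).mp h.symm
      have hf0 : (fun x => (μ.rnDeriv ν x).toReal) =ᵐ[ν] 0 := by
        filter_upwards [hz] with x hx
        have hx' : min ((μ.rnDeriv ν x).toReal) (n:ℝ) = 0 := hx
        by_contra hne
        have hpos : 0 < (μ.rnDeriv ν x).toReal := lt_of_le_of_ne (hf_nonneg x) (Ne.symm hne)
        have : 0 < min ((μ.rnDeriv ν x).toReal) (n:ℝ) := lt_min hpos (by linarith)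
        simp [hx'] at this
      rw [integral_congr_ae hf0] at hf_one
      simp at hf_one
  have hCinv_nonneg : 0 ≤ Cn⁻¹ := inv_nonneg.mpr hCn_pos.le
  have hCinv_ge1 : 1 ≤ Cn⁻¹ := one_le_inv_iff₀.mpr ⟨hCn_pos, hCn_le_one⟩
  have hM1 : (1:ℝ) ≤ Cn⁻¹ * n := le_trans hCinv_ge1 (le_mul_of_one_le_right hCinv_nonneg hn1)
  -- density and measure
  set d : X → ℝ≥0∞ := fun x => ENNReal.ofReal (Cn⁻¹ * min ((μ.rnDeriv ν x).toReal) (n:ℝ))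
    with hd_def
  have hd_meas : Measurable d :=
    (measurable_const.mul (hf_meas.min measurable_const)).ennreal_ofReal
  set μn : Measure X := ν.withDensity d with hμn_def
  have hac : μn ≪ ν := withDensity_absolutelyContinuous _ _
  have hrn : μn.rnDeriv ν =ᵐ[ν] d := Measure.rnDeriv_withDensity ν hd_meas
  have h_lint : ∫⁻ x, ENNReal.ofReal (min ((μ.rnDeriv ν x).toReal) (n:ℝ)) ∂ν
      = ENNReal.ofReal Cn :=
    (ofReal_integral_eq_lintegral_ofReal hg_int (ae_of_all _ hg_nonneg)).symm
  have h_prob : IsProbabilityMeasure μn := by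
    constructor
    rw [hμn_def, withDensity_apply _ MeasurableSet.univ, setLIntegral_univ]
    calc ∫⁻ x, d x ∂ν
        = ∫⁻ x, ENNReal.ofReal Cn⁻¹ *
            ENNReal.ofReal (min ((μ.rnDeriv ν x).toReal) (n:ℝ)) ∂ν := by
          refine lintegral_congr fun x => ?_
          exact ENNReal.ofReal_mul hCinv_nonneg
      _ = ENNReal.ofReal Cn⁻¹ * ENNReal.ofReal Cn := by
          rw [lintegral_const_mul _ (hf_meas.min measurable_const).ennreal_ofReal, h_lint]
      _ = 1 := by
          rw [← ENNReal.ofReal_mul hCinv_nonneg, inv_mul_cancel₀ hCn_pos.ne',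
            ENNReal.ofReal_one]
  haveI := h_prob
  -- Entropy 1
  have key_ae : (fun x => Real.log (μn.rnDeriv ν x).toReal)
      =ᵐ[μn] (fun x => Real.log (Cn⁻¹ * min ((μ.rnDeriv ν x).toReal) (n:ℝ))) := by
    filter_upwards [hrn.filter_mono hac.ae_le] with x hx
    rw [hx]
    exact congrArg Real.log (ENNReal.toReal_ofReal (mul_nonneg hCinv_nonneg (hg_nonneg x)))
  have hF_int : Integrable
      (fun x => Real.log (Cn⁻¹ * min ((μ.rnDeriv ν x).toReal) (n:ℝ))) μn := by
    rw [hμn_def, integrable_withDensity_iff hd_meas (ae_of_all _ fun x => ENNReal.ofReal_lt_top)]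
    refine (integrable_const (max 1 (Cn⁻¹ * n * Real.log (Cn⁻¹ * n)))).mono'
      ((Real.measurable_log.comp (measurable_const.mul (hf_meas.min measurable_const))).mul
        hd_meas.ennreal_toReal).aestronglyMeasurable (ae_of_all _ fun x => ?_)
    have hs0 : 0 ≤ Cn⁻¹ * min ((μ.rnDeriv ν x).toReal) (n:ℝ) :=
      mul_nonneg hCinv_nonneg (hg_nonneg x)
    have hsM : Cn⁻¹ * min ((μ.rnDeriv ν x).toReal) (n:ℝ) ≤ Cn⁻¹ * n :=
      mul_le_mul_of_nonneg_left (min_le_right _ _) hCinv_nonneg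
    have hdx : (d x).toReal = Cn⁻¹ * min ((μ.rnDeriv ν x).toReal) (n:ℝ) :=
      ENNReal.toReal_ofReal hs0
    rw [Real.norm_eq_abs, hdx]
    rcases eq_or_lt_of_le hs0 with h0 | h0
    · rw [← h0]
      simpa using le_max_of_le_left zero_le_one
    · rcases le_or_gt (Cn⁻¹ * min ((μ.rnDeriv ν x).toReal) (n:ℝ)) 1 with h1 | h1
      · exact le_max_of_le_left (Real.abs_log_mul_self_lt _ h0 h1).le
      · rw [abs_of_nonneg (mul_nonneg (Real.log_nonneg h1.le) hs0)]
        refine le_max_of_le_right ?_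
        have hlog : Real.log (Cn⁻¹ * min ((μ.rnDeriv ν x).toReal) (n:ℝ))
            ≤ Real.log (Cn⁻¹ * n) := Real.log_le_log h0 hsM
        have hlogM : 0 ≤ Real.log (Cn⁻¹ * n) := Real.log_nonneg hM1
        nlinarith
  have hInt1 : Integrable (fun x => Real.log (μn.rnDeriv ν x).toReal) μn :=
    hF_int.congr key_ae.symm
  have hbound1 : ∫ x, Real.log (μn.rnDeriv ν x).toReal ∂μn
      ≤ Real.log n - Real.log Cn := by
    have hb : ∀ᵐ x ∂μn, Real.log (μn.rnDeriv ν x).toReal ≤ Real.log n - Real.log Cn := by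
      filter_upwards [key_ae] with x hx
      rw [hx]
      have hlogn : 0 ≤ Real.log (n:ℝ) := Real.log_nonneg hn1
      have hlogC : Real.log Cn ≤ 0 := Real.log_nonpos hCn_pos.le hCn_le_one
      rcases eq_or_lt_of_le (mul_nonneg hCinv_nonneg (hg_nonneg x)) with h0 | h0
      · rw [← h0, Real.log_zero]; linarith
      · have : Real.log (Cn⁻¹ * min ((μ.rnDeriv ν x).toReal) (n:ℝ))
            ≤ Real.log (Cn⁻¹ * n) :=
          Real.log_le_log h0 (mul_le_mul_of_nonneg_left (min_le_right _ _) hCinv_nonneg)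
        have h3 : Real.log (Cn⁻¹ * (n:ℝ)) = Real.log Cn⁻¹ + Real.log n :=
          Real.log_mul (inv_ne_zero hCn_pos.ne')
            (by exact_mod_cast Nat.one_le_iff_ne_zero.mp hn)
        have h4 : Real.log Cn⁻¹ = -Real.log Cn := Real.log_inv Cn
        linarith
    calc ∫ x, Real.log (μn.rnDeriv ν x).toReal ∂μn
        ≤ ∫ _, (Real.log n - Real.log Cn) ∂μn := integral_mono_ae hInt1 (integrable_const _) hb
      _ = Real.log n - Real.log Cn := by simp
  -- μn ≪ μ
  have hacμ : μn ≪ μ := by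
    refine Measure.absolutelyContinuous_of_le_smul
      (c := ENNReal.ofReal Cn⁻¹) (μ := μ) ?_
    have hle : d ≤ᵐ[ν] fun x => ENNReal.ofReal Cn⁻¹ * μ.rnDeriv ν x := by
      filter_upwards [] with x
      calc d x = ENNReal.ofReal Cn⁻¹ *
            ENNReal.ofReal (min ((μ.rnDeriv ν x).toReal) (n:ℝ)) :=
          ENNReal.ofReal_mul hCinv_nonneg
        _ ≤ ENNReal.ofReal Cn⁻¹ * μ.rnDeriv ν x := by
            gcongr
            exact (ENNReal.ofReal_le_ofReal (min_le_left _ _)).trans ENNReal.ofReal_toReal_le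
    calc μn ≤ ν.withDensity (fun x => ENNReal.ofReal Cn⁻¹ * μ.rnDeriv ν x) :=
        withDensity_mono hle
      _ = ENNReal.ofReal Cn⁻¹ • μ := by
        rw [show (fun x => ENNReal.ofReal Cn⁻¹ * μ.rnDeriv ν x)
            = ENNReal.ofReal Cn⁻¹ • μ.rnDeriv ν from rfl,
          withDensity_smul _ (Measure.measurable_rnDeriv μ ν),
          Measure.withDensity_rnDeriv_eq μ ν hμν]
  have hZ : μn {x | (μ.rnDeriv ν x).toReal = 0} = 0 := by
    have hms : MeasurableSet {x | (μ.rnDeriv ν x).toReal = 0} :=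
      hf_meas (measurableSet_singleton 0)
    rw [hμn_def, withDensity_apply _ hms]
    have hae : ∀ᵐ x ∂ν, x ∈ {x | (μ.rnDeriv ν x).toReal = 0} → d x = (0 : X → ℝ≥0∞) x := by
      refine ae_of_all _ fun x hx => ?_
      have hx0 : (μ.rnDeriv ν x).toReal = 0 := hx
      have hm0 : min ((μ.rnDeriv ν x).toReal) (n:ℝ) = 0 := by
        rw [hx0]; exact min_eq_left (Nat.cast_nonneg n)
      show ENNReal.ofReal (Cn⁻¹ * min ((μ.rnDeriv ν x).toReal) (n:ℝ)) = 0
      rw [hm0, mul_zero, ENNReal.ofReal_zero]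
    rw [setLIntegral_congr_fun_ae hms hae]
    simp
  have hfpos : ∀ᵐ x ∂μn, 0 < (μ.rnDeriv ν x).toReal := by
    rw [ae_iff]
    have hset : {x | ¬ 0 < (μ.rnDeriv ν x).toReal} = {x | (μ.rnDeriv ν x).toReal = 0} := by
      ext x
      simp only [Set.mem_setOf_eq, not_lt]
      exact ⟨fun h => le_antisymm h (hf_nonneg x), fun h => h.le⟩
    rw [hset]
    exact hZ
  have hmul : μn.rnDeriv μ * μ.rnDeriv ν =ᵐ[ν] μn.rnDeriv ν :=
    Measure.rnDeriv_mul_rnDeriv hacμ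
  have key2 : ∀ᵐ x ∂μn, (μn.rnDeriv μ x).toReal
      = Cn⁻¹ * min ((μ.rnDeriv ν x).toReal) (n:ℝ) / (μ.rnDeriv ν x).toReal := by
    filter_upwards [hmul.filter_mono hac.ae_le, hrn.filter_mono hac.ae_le, hfpos,
      (Measure.rnDeriv_lt_top μn μ).filter_mono hacμ.ae_le,
      (Measure.rnDeriv_lt_top μ ν).filter_mono hac.ae_le] with x h1 h2 h3 h4 h5
    have h1' : μn.rnDeriv μ x * μ.rnDeriv ν x = d x := by
      rw [← h2]; exact h1
    have he : (μn.rnDeriv μ x).toReal * (μ.rnDeriv ν x).toReal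
        = Cn⁻¹ * min ((μ.rnDeriv ν x).toReal) (n:ℝ) := by
      have := congrArg ENNReal.toReal h1'
      rwa [ENNReal.toReal_mul,
        ENNReal.toReal_ofReal (mul_nonneg hCinv_nonneg (hg_nonneg x))] at this
    rw [eq_div_iff h3.ne']
    exact he
  have hb2 : ∀ᵐ x ∂μn, Real.log (μn.rnDeriv μ x).toReal ≤ -Real.log Cn := by
    filter_upwards [key2, hfpos] with x hk hx
    rw [hk]
    have hnpos : (0:ℝ) < n := by linarith
    have hmin_pos : 0 < min ((μ.rnDeriv ν x).toReal) (n:ℝ) := lt_min hx hnpos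
    have hq_pos : 0 < Cn⁻¹ * min ((μ.rnDeriv ν x).toReal) (n:ℝ) / (μ.rnDeriv ν x).toReal :=
      div_pos (mul_pos (inv_pos.mpr hCn_pos) hmin_pos) hx
    have hq_le : Cn⁻¹ * min ((μ.rnDeriv ν x).toReal) (n:ℝ) / (μ.rnDeriv ν x).toReal
        ≤ Cn⁻¹ := by
      rw [div_le_iff₀ hx]
      exact mul_le_mul_of_nonneg_left (min_le_left _ _) hCinv_nonneg
    calc Real.log _ ≤ Real.log Cn⁻¹ := Real.log_le_log hq_pos hq_le
      _ = -Real.log Cn := Real.log_inv Cn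
  have hG_int : Integrable (fun x => Real.log (Cn⁻¹ * min ((μ.rnDeriv ν x).toReal) (n:ℝ)
      / (μ.rnDeriv ν x).toReal)) μn := by
    rw [hμn_def, integrable_withDensity_iff hd_meas (ae_of_all _ fun x => ENNReal.ofReal_lt_top)]
    refine (hf_int.const_mul (Cn⁻¹ * (|Real.log Cn| + 1))).mono'
      ((Real.measurable_log.comp ((measurable_const.mul
        (hf_meas.min measurable_const)).div hf_meas)).mul
        hd_meas.ennreal_toReal).aestronglyMeasurable (ae_of_all _ fun x => ?_)
    have hdx : (d x).toReal = Cn⁻¹ * min ((μ.rnDeriv ν x).toReal) (n:ℝ) :=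
      ENNReal.toReal_ofReal (mul_nonneg hCinv_nonneg (hg_nonneg x))
    rw [Real.norm_eq_abs, hdx, abs_mul, abs_of_nonneg (mul_nonneg hCinv_nonneg (hg_nonneg x))]
    rcases eq_or_lt_of_le (hf_nonneg x) with h0 | h0
    · have hm0 : min ((μ.rnDeriv ν x).toReal) (n:ℝ) = 0 := by
        rw [← h0]; exact min_eq_left (Nat.cast_nonneg n)
      rw [hm0, mul_zero, mul_zero, ← h0, mul_zero]
    · have hnpos : (0:ℝ) < n := by linarith
      have hm_pos : 0 < min ((μ.rnDeriv ν x).toReal) (n:ℝ) := lt_min h0 hnpos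
      have hqpos : 0 < min ((μ.rnDeriv ν x).toReal) (n:ℝ) / (μ.rnDeriv ν x).toReal :=
        div_pos hm_pos h0
      have hqle1 : min ((μ.rnDeriv ν x).toReal) (n:ℝ) / (μ.rnDeriv ν x).toReal ≤ 1 :=
        (div_le_one h0).mpr (min_le_left _ _)
      have hsplit : Real.log (Cn⁻¹ * min ((μ.rnDeriv ν x).toReal) (n:ℝ)
          / (μ.rnDeriv ν x).toReal)
          = Real.log Cn⁻¹ + Real.log (min ((μ.rnDeriv ν x).toReal) (n:ℝ)
            / (μ.rnDeriv ν x).toReal) := by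
        rw [mul_div_assoc]
        exact Real.log_mul (inv_ne_zero hCn_pos.ne') hqpos.ne'
      have habs2 : |Real.log (min ((μ.rnDeriv ν x).toReal) (n:ℝ) / (μ.rnDeriv ν x).toReal)|
          = Real.log ((μ.rnDeriv ν x).toReal / min ((μ.rnDeriv ν x).toReal) (n:ℝ)) := by
        rw [abs_of_nonpos (Real.log_nonpos hqpos.le hqle1), ← Real.log_inv, inv_div]
      have habs : |Real.log (Cn⁻¹ * min ((μ.rnDeriv ν x).toReal) (n:ℝ)
          / (μ.rnDeriv ν x).toReal)|
          ≤ |Real.log Cn| + Real.log ((μ.rnDeriv ν x).toReal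
            / min ((μ.rnDeriv ν x).toReal) (n:ℝ)) := by
        rw [hsplit]
        refine (abs_add_le _ _).trans ?_
        rw [Real.log_inv, abs_neg, habs2]
      have h5 : Real.log ((μ.rnDeriv ν x).toReal / min ((μ.rnDeriv ν x).toReal) (n:ℝ))
          * min ((μ.rnDeriv ν x).toReal) (n:ℝ) ≤ (μ.rnDeriv ν x).toReal := by
        have hlog_le : Real.log ((μ.rnDeriv ν x).toReal / min ((μ.rnDeriv ν x).toReal) (n:ℝ))
            ≤ (μ.rnDeriv ν x).toReal / min ((μ.rnDeriv ν x).toReal) (n:ℝ) := by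
          have := Real.log_le_sub_one_of_pos (div_pos h0 hm_pos)
          linarith
        calc Real.log ((μ.rnDeriv ν x).toReal / min ((μ.rnDeriv ν x).toReal) (n:ℝ))
              * min ((μ.rnDeriv ν x).toReal) (n:ℝ)
            ≤ ((μ.rnDeriv ν x).toReal / min ((μ.rnDeriv ν x).toReal) (n:ℝ))
              * min ((μ.rnDeriv ν x).toReal) (n:ℝ) :=
              mul_le_mul_of_nonneg_right hlog_le hm_pos.le
          _ = (μ.rnDeriv ν x).toReal := div_mul_cancel₀ _ hm_pos.ne'
      have hmf : min ((μ.rnDeriv ν x).toReal) (n:ℝ) ≤ (μ.rnDeriv ν x).toReal :=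
        min_le_left _ _
      have hh1 : 0 ≤ Cn⁻¹ * (|Real.log Cn|
          * ((μ.rnDeriv ν x).toReal - min ((μ.rnDeriv ν x).toReal) (n:ℝ))) :=
        mul_nonneg hCinv_nonneg (mul_nonneg (abs_nonneg _) (by linarith))
      have hh2 : 0 ≤ Cn⁻¹ * ((μ.rnDeriv ν x).toReal
          - Real.log ((μ.rnDeriv ν x).toReal / min ((μ.rnDeriv ν x).toReal) (n:ℝ))
            * min ((μ.rnDeriv ν x).toReal) (n:ℝ)) :=
        mul_nonneg hCinv_nonneg (by linarith)
      calc |Real.log (Cn⁻¹ * min ((μ.rnDeriv ν x).toReal) (n:ℝ) / (μ.rnDeriv ν x).toReal)|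
            * (Cn⁻¹ * min ((μ.rnDeriv ν x).toReal) (n:ℝ))
          ≤ (|Real.log Cn| + Real.log ((μ.rnDeriv ν x).toReal
              / min ((μ.rnDeriv ν x).toReal) (n:ℝ)))
            * (Cn⁻¹ * min ((μ.rnDeriv ν x).toReal) (n:ℝ)) :=
            mul_le_mul_of_nonneg_right habs (mul_nonneg hCinv_nonneg (hg_nonneg x))
        _ ≤ Cn⁻¹ * (|Real.log Cn| + 1) * (μ.rnDeriv ν x).toReal := by nlinarith
  have key2' : (fun x => Real.log (μn.rnDeriv μ x).toReal)
      =ᵐ[μn] (fun x => Real.log (Cn⁻¹ * min ((μ.rnDeriv ν x).toReal) (n:ℝ)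
        / (μ.rnDeriv ν x).toReal)) :=
    key2.mono fun x hx => by dsimp only; rw [hx]
  have hInt2 : Integrable (fun x => Real.log (μn.rnDeriv μ x).toReal) μn :=
    hG_int.congr key2'.symm
  have hbound2 : ∫ x, Real.log (μn.rnDeriv μ x).toReal ∂μn ≤ 1 - Real.log Cn := by
    calc ∫ x, Real.log (μn.rnDeriv μ x).toReal ∂μn
        ≤ ∫ _, (-Real.log Cn) ∂μn := integral_mono_ae hInt2 (integrable_const _) hb2
      _ = -Real.log Cn := by simp
      _ ≤ 1 - Real.log Cn := by linarith
  constructor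
  · unfold relEntropy
    rw [if_pos ⟨hac, hInt1⟩]
    exact ENNReal.ofReal_le_ofReal hbound1
  · unfold relEntropy
    rw [if_pos ⟨hacμ, hInt2⟩]
    exact ENNReal.ofReal_le_ofReal hbound2
end
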